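/- Let A be a subset of the unit sphere of ℝⁿ, let L be the linear span of A with dim L = k, and suppose the origin lies in the interior of the convex hull of A relative to L. Then the intersection over x ∈ A of the half-spaces {y : ⟨x,y⟩ ≤ 0} equals the orthogonal complement L⊥, an (n−k)-dimensional linear subspace; in particular it coincides with the intersection of the hyperplanes {y : ⟨x,y⟩ = 0}. -/

import Mathlib

theorem inter_halfspaces_eq_orthogonal_complement (n k : ℕ)
    (A : Set (EuclideanSpace ℝ (Fin n)))
    (hA : ∀ x ∈ A, ‖x‖ = 1)
    (L : Submodule ℝ (EuclideanSpace ℝ (Fin n)))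
    (hL : L = Submodule.span ℝ A)
    (hk : Module.finrank ℝ L = k)
    (h0 : (0 : L) ∈ interior ((Subtype.val ⁻¹' (convexHull ℝ A)) : Set L)) :
    (⋂ x ∈ A, {y : EuclideanSpace ℝ (Fin n) | inner ℝ x y ≤ (0 : ℝ)}) = (Lᗮ : Set (EuclideanSpace ℝ (Fin n))) ∧
    Module.finrank ℝ Lᗮ = n - k ∧
    (⋂ x ∈ A, {y : EuclideanSpace ℝ (Fin n) | inner ℝ x y ≤ (0 : ℝ)}) =
      (⋂ x ∈ A, {y : EuclideanSpace ℝ (Fin n) | inner ℝ x y = (0 : ℝ)}) := by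
  have hAL : A ⊆ (L : Set (EuclideanSpace ℝ (Fin n))) := by
    rw [hL]; exact Submodule.subset_span
  -- key claim : if inner x y ≤ 0 for all x ∈ A then y ∈ Lᗮ
  have key : ∀ y : EuclideanSpace ℝ (Fin n),
      (∀ x ∈ A, inner ℝ x y ≤ (0:ℝ)) → y ∈ Lᗮ := by
    intro y hy
    rw [Submodule.mem_orthogonal]
    -- the halfspace bound extends to the convex hull
    have hconv : ∀ z ∈ convexHull ℝ A, inner ℝ z y ≤ (0:ℝ) := by
      have hcs : convexHull ℝ A ⊆ {z : EuclideanSpace ℝ (Fin n) | inner ℝ z y ≤ (0:ℝ)} := by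
        apply convexHull_min
        · intro x hx; exact hy x hx
        · intro a ha b hb s t hs ht hst
          simp only [Set.mem_setOf_eq] at ha hb ⊢
          rw [inner_add_left, real_inner_smul_left, real_inner_smul_left]
          nlinarith
      exact fun z hz => hcs hz
    -- extract a ball from the interior hypothesis
    obtain ⟨ε, hε, hball⟩ := Metric.mem_nhds_iff.mp (mem_interior_iff_mem_nhds.mp h0)
    have hsmall : ∀ (v : EuclideanSpace ℝ (Fin n)) (hv : v ∈ L), ‖v‖ < ε →
        v ∈ convexHull ℝ A := by
      intro v hv hnv
      have hmem : (⟨v, hv⟩ : L) ∈ Metric.ball (0 : L) ε := by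
        rw [Metric.mem_ball, dist_zero_right]
        simpa using hnv
      exact hball hmem
    intro u hu
    rcases eq_or_ne u 0 with rfl | hu0
    · simp
    · have hnorm : (0:ℝ) < ‖u‖ := norm_pos_iff.mpr hu0
      set t : ℝ := ε / (2 * ‖u‖) with ht
      have htpos : 0 < t := by positivity
      have hnt : ‖t • u‖ < ε := by
        rw [norm_smul, Real.norm_of_nonneg htpos.le, ht]
        rw [div_mul_eq_mul_div, mul_comm]
        rw [div_lt_iff₀ (by positivity)]
        nlinarith
      have h1 : inner ℝ (t • u) y ≤ (0:ℝ) :=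
        hconv _ (hsmall _ (L.smul_mem t hu) hnt)
      have h2 : inner ℝ (t • (-u)) y ≤ (0:ℝ) := by
        apply hconv _ (hsmall _ (L.smul_mem t (L.neg_mem hu)) ?_)
        simpa using hnt
      rw [real_inner_smul_left] at h1
      rw [real_inner_smul_left, inner_neg_left] at h2
      nlinarith
  have hsub : (⋂ x ∈ A, {y : EuclideanSpace ℝ (Fin n) | inner ℝ x y ≤ (0 : ℝ)})
      = (Lᗮ : Set (EuclideanSpace ℝ (Fin n))) := by
    ext y
    simp only [Set.mem_iInter, Set.mem_setOf_eq, SetLike.mem_coe]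
    constructor
    · intro h; exact key y h
    · intro h x hx
      exact le_of_eq ((Submodule.mem_orthogonal L y).mp h x (hAL hx))
  have heq : (⋂ x ∈ A, {y : EuclideanSpace ℝ (Fin n) | inner ℝ x y ≤ (0 : ℝ)})
      = (⋂ x ∈ A, {y : EuclideanSpace ℝ (Fin n) | inner ℝ x y = (0 : ℝ)}) := by
    ext y
    simp only [Set.mem_iInter, Set.mem_setOf_eq]
    constructor
    · intro h x hx
      exact (Submodule.mem_orthogonal L y).mp (key y h) x (hAL hx)
    · intro h x hx
      exact le_of_eq (h x hx)
  refine ⟨hsub, ?_, heq⟩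
  have := Submodule.finrank_add_finrank_orthogonal (K := L)
  rw [hk] at this
  have hn : Module.finrank ℝ (EuclideanSpace ℝ (Fin n)) = n := by
    simp [finrank_euclideanSpace]
  omega
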